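/- arXiv:1301.7455 — 14 statements merged into one kernel-verified Lean document; each statement's English description precedes it below -/
import Mathlib

section
/- For every finite set V, every weight function w : V → V → ℝ with w i j ≥ 0 and w i i = 0, every internal-opinion vector s : V → ℝ, and every subset T ⊆ V, there exists a unique vector z : V → ℝ such that z i = 1 for every i ∈ T and z i · (1 + W i) = s i + Σ_{j ∈ V} w i j · z j for every i ∉ T, where W i = Σ_{j ∈ V} w i j. -/
/-- existence and uniqueness of the T-equilibrium. -/
theorem campaign_equilibrium_exists_unique
    {V : Type*} [Fintype V] (w : V → V → ℝ)
    (hw : ∀ i j, 0 ≤ w i j) (hdiag : ∀ i, w i i = 0)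
    (s : V → ℝ) (T : Finset V) :
    ∃! z : V → ℝ,
      (∀ i ∈ T, z i = 1) ∧
      (∀ i ∉ T, z i * (1 + ∑ j, w i j) = s i + ∑ j, w i j * z j) := by
  classical
  set U := {i : V // i ∉ T}
  set A : Matrix U U ℝ := fun i j =>
    (if i = j then (1 : ℝ) + ∑ k, w i.1 k else 0) - w i.1 j.1 with hA
  set b : U → ℝ := fun i => s i.1 + ∑ j ∈ T, w i.1 j with hb
  have hWnn : ∀ i : V, (0:ℝ) ≤ ∑ k, w i k := fun i =>
    Finset.sum_nonneg fun k _ => hw i k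
  -- strict diagonal dominance
  have hdet : A.det ≠ 0 := by
    apply det_ne_zero_of_sum_row_lt_diag
    intro k
    have h1 : ∀ j ∈ Finset.univ.erase k, ‖A k j‖ = w k.1 j.1 := by
      intro j hj
      have hjk : j ≠ k := Finset.ne_of_mem_erase hj
      simp [hA, (Ne.symm hjk : k ≠ j), abs_of_nonneg (hw k.1 j.1)]
    rw [Finset.sum_congr rfl h1]
    have h2 : ‖A k k‖ = 1 + ∑ m, w k.1 m := by
      simp [hA, hdiag k.1, abs_of_nonneg (by linarith [hWnn k.1] : (0:ℝ) ≤ 1 + ∑ m, w k.1 m)]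
    rw [h2]
    have h3 : ∑ j ∈ Finset.univ.erase k, w k.1 j.1 ≤ ∑ m, w k.1 m := by
      have : ∑ j ∈ Finset.univ.erase k, w k.1 j.1
          = ∑ j ∈ (Finset.univ.erase k).image (fun j : U => j.1), w k.1 j := by
        rw [Finset.sum_image]
        intro a _ c _ h; exact Subtype.ext h
      rw [this]
      exact Finset.sum_le_sum_of_subset_of_nonneg (Finset.subset_univ _)
        (fun m _ _ => hw k.1 m)
    linarith
  have hU : IsUnit A := A.isUnit_iff_isUnit_det.mpr (Ne.isUnit hdet)
  have hAinj : Function.Injective A.mulVec := by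
    intro x y hxy
    have := congrArg (A⁻¹.mulVec) hxy
    rwa [Matrix.mulVec_mulVec, Matrix.mulVec_mulVec, Matrix.nonsing_inv_mul A
      (Ne.isUnit hdet), Matrix.one_mulVec, Matrix.one_mulVec] at this
  -- key equivalence
  have hkey : ∀ z : V → ℝ, (∀ i ∈ T, z i = 1) →
      ∀ i : U, (z i.1 * (1 + ∑ j, w i.1 j) = s i.1 + ∑ j, w i.1 j * z j
        ↔ A.mulVec (fun j : U => z j.1) i = b i) := by
    intro z hzT i
    have hmv : A.mulVec (fun j : U => z j.1) i
        = (1 + ∑ k, w i.1 k) * z i.1 - ∑ j : U, w i.1 j.1 * z j.1 := by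
      simp only [Matrix.mulVec, dotProduct, hA, sub_mul, Finset.sum_sub_distrib,
        ite_mul, zero_mul]
      rw [Finset.sum_ite_eq (Finset.univ) i (fun j => ((1:ℝ) + ∑ k, w i.1 k) * z j.1)]
      simp
    have hsum : ∑ j, w i.1 j * z j
        = (∑ j ∈ T, w i.1 j) + ∑ j : U, w i.1 j.1 * z j.1 := by
      rw [← Finset.sum_filter_add_sum_filter_not Finset.univ (· ∈ T)
        (fun j => w i.1 j * z j)]
      congr 1
      · rw [Finset.filter_univ_mem]
        exact Finset.sum_congr rfl fun j hj => by rw [hzT j hj, mul_one]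
      · exact Finset.sum_subtype (Finset.univ.filter (fun j => j ∉ T)) (by simp [U])
          (fun j => w i.1 j * z j)
    have hbi : b i = s i.1 + ∑ j ∈ T, w i.1 j := rfl
    rw [hmv, hsum, hbi]
    constructor <;> intro h <;> linarith
  -- the solution
  obtain ⟨x, hx⟩ : ∃ x, A.mulVec x = b := by
    refine ⟨A⁻¹.mulVec b, ?_⟩
    rw [Matrix.mulVec_mulVec, Matrix.mul_nonsing_inv A (Ne.isUnit hdet), Matrix.one_mulVec]
  set z : V → ℝ := fun i => if h : i ∈ T then 1 else x ⟨i, h⟩ with hz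
  have hzT : ∀ i ∈ T, z i = 1 := fun i hi => by simp [hz, hi]
  have hxz : (fun j : U => z j.1) = x := by
    funext j; simp [hz, j.2]
  refine ⟨z, ⟨hzT, fun i hi => ?_⟩, ?_⟩
  · rw [hkey z hzT ⟨i, hi⟩, hxz, hx]
  · rintro z' ⟨hz'T, hz'e⟩
    have hx' : A.mulVec (fun j : U => z' j.1) = b := by
      funext i; exact (hkey z' hz'T i).mp (hz'e i.1 i.2)
    have : (fun j : U => z' j.1) = x := hAinj (by rw [hx', hx])
    funext i
    by_cases hi : i ∈ T
    · rw [hz'T i hi, hzT i hi]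
    · have := congrFun this ⟨i, hi⟩
      simp [hz, hi, this]
end

section
/- Let V be a finite set, w a weight function on V, and s : V → ℝ. If z : V → ℝ satisfies z i · (1 + W i) = s i + Σ_{j ∈ V} w i j · z j for every i ∈ V, then z is a Nash equilibrium of the opinion-formation game: for every node i ∈ V and every y ∈ ℝ, c i (z) ≤ c i (z') where z' agrees with z except that z' i = y. -/
/-- The personal cost of node `i` at opinion vector `z` with internal opinions `s`. -/
noncomputable def personalCost {V : Type*} [Fintype V]
    (w : V → V → ℝ) (s : V → ℝ) (i : V) (z : V → ℝ) : ℝ :=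
  (s i - z i) ^ 2 + ∑ j, w i j * (z i - z j) ^ 2

/-- the unconstrained equilibrium is a Nash equilibrium of the
opinion-formation game. -/
theorem campaign_equilibrium_is_nash
    {V : Type*} [Fintype V] [DecidableEq V] (w : V → V → ℝ)
    (hw : ∀ i j, 0 ≤ w i j) (hdiag : ∀ i, w i i = 0)
    (s : V → ℝ) (z : V → ℝ)
    (heq : ∀ i, z i * (1 + ∑ j, w i j) = s i + ∑ j, w i j * z j) :
    ∀ i : V, ∀ y : ℝ,
      personalCost w s i z ≤ personalCost w s i (Function.update z i y) := by
  intro i y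
  have hupd : ∀ j, w i j * (y - Function.update z i y j) ^ 2 = w i j * (y - z j) ^ 2 := by
    intro j
    by_cases h : j = i
    · subst h; simp [hdiag]
    · simp [Function.update_of_ne h]
  have hW : (0:ℝ) ≤ ∑ j, w i j := Finset.sum_nonneg fun j _ => hw i j
  have hsum : ∑ j, w i j * (y - z j) ^ 2
      = ∑ j, w i j * (z i - z j) ^ 2 + 2 * (y - z i) * (∑ j, w i j * (z i - z j))
        + (y - z i) ^ 2 * ∑ j, w i j := by
    rw [Finset.mul_sum, Finset.mul_sum, ← Finset.sum_add_distrib, ← Finset.sum_add_distrib]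
    exact Finset.sum_congr rfl fun j _ => by ring
  have h1 : ∑ j, w i j * (z i - z j) = z i * (∑ j, w i j) - ∑ j, w i j * z j := by
    rw [Finset.mul_sum, ← Finset.sum_sub_distrib]
    exact Finset.sum_congr rfl fun j _ => by ring
  have hcross : ∑ j, w i j * (z i - z j) = s i - z i := by
    have h2 := heq i
    rw [h1]; linarith [h2]
  simp only [personalCost, Function.update_self, hupd, hsum, hcross]
  nlinarith [sq_nonneg (y - z i), mul_nonneg (sq_nonneg (y - z i)) hW]
end

section
/- Let V be a finite set, w a weight function on V, s : V → ℝ with 0 ≤ s i ≤ 1 for all i, and let T ⊆ T' ⊆ V. If z is a T-equilibrium and z' is a T'-equilibrium for (w, s), then z i ≤ z' i for every node i ∈ V. -/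
/-- Any T-equilibrium with s ≤ 1 satisfies z ≤ 1 (maximum principle). -/
lemma campaign_equilibrium_le_one
    {V : Type*} [Fintype V] (w : V → V → ℝ)
    (hw : ∀ i j, 0 ≤ w i j)
    (s : V → ℝ) (hs : ∀ i, 0 ≤ s i ∧ s i ≤ 1)
    (T : Finset V) (z : V → ℝ)
    (hz1 : ∀ i ∈ T, z i = 1)
    (hz2 : ∀ i ∉ T, z i * (1 + ∑ j, w i j) = s i + ∑ j, w i j * z j) :
    ∀ i : V, z i ≤ 1 := by
  intro i
  have : Nonempty V := ⟨i⟩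
  obtain ⟨i0, hi0⟩ := Finite.exists_max z
  refine le_trans (hi0 i) ?_
  by_cases h : i0 ∈ T
  · rw [hz1 i0 h]
  · have key := hz2 i0 h
    have hsum : ∑ j, w i0 j * z j ≤ (∑ j, w i0 j) * z i0 := by
      rw [Finset.sum_mul]
      exact Finset.sum_le_sum fun j _ =>
        mul_le_mul_of_nonneg_left (hi0 j) (hw i0 j)
    have hW : 0 ≤ ∑ j, w i0 j :=
      Finset.sum_nonneg fun j _ => hw i0 j
    have hs1 := (hs i0).2
    nlinarith [key, hsum, hW, hs1]

/-- pointwise monotonicity of the equilibrium in the target set. -/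
theorem campaign_equilibrium_monotone_pointwise
    {V : Type*} [Fintype V] (w : V → V → ℝ)
    (hw : ∀ i j, 0 ≤ w i j) (hdiag : ∀ i, w i i = 0)
    (s : V → ℝ) (hs : ∀ i, 0 ≤ s i ∧ s i ≤ 1)
    (T T' : Finset V) (hTT' : T ⊆ T')
    (z z' : V → ℝ)
    (hz1 : ∀ i ∈ T, z i = 1)
    (hz2 : ∀ i ∉ T, z i * (1 + ∑ j, w i j) = s i + ∑ j, w i j * z j)
    (hz'1 : ∀ i ∈ T', z' i = 1)
    (hz'2 : ∀ i ∉ T', z' i * (1 + ∑ j, w i j) = s i + ∑ j, w i j * z' j) :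
    ∀ i : V, z i ≤ z' i := by
  intro i
  have : Nonempty V := ⟨i⟩
  obtain ⟨i0, hi0⟩ := Finite.exists_max (fun j => z j - z' j)
  have hkey : z i0 - z' i0 ≤ 0 := by
    by_cases h : i0 ∈ T'
    · have h1 : z i0 ≤ 1 :=
        campaign_equilibrium_le_one w hw s hs T z hz1 hz2 i0
      rw [hz'1 i0 h]
      linarith
    · have hT : i0 ∉ T := fun hm => h (hTT' hm)
      have key := hz2 i0 hT
      have key' := hz'2 i0 h
      have hsum : ∑ j, w i0 j * z j - ∑ j, w i0 j * z' j
          ≤ (∑ j, w i0 j) * (z i0 - z' i0) := by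
        rw [← Finset.sum_sub_distrib, Finset.sum_mul]
        refine Finset.sum_le_sum fun j _ => ?_
        rw [← mul_sub]
        exact mul_le_mul_of_nonneg_left (hi0 j) (hw i0 j)
      have hW : 0 ≤ ∑ j, w i0 j :=
        Finset.sum_nonneg fun j _ => hw i0 j
      nlinarith [key, key', hsum, hW]
  have := hi0 i
  linarith
end

section
/- (Monotonicity of the campaign objective.) Let V be a finite set, w a weight function on V, s : V → ℝ with 0 ≤ s i ≤ 1 for all i, and let T ⊆ T' ⊆ V. If z is a T-equilibrium and z' is a T'-equilibrium for (w, s), then g(z) ≤ g(z'), where g(z) = Σ_{i ∈ V} z i. -/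
/-- monotonicity of the campaign objective g(z) = Σ_i z i. -/
theorem campaign_objective_monotone
    {V : Type*} [Fintype V] (w : V → V → ℝ)
    (hw : ∀ i j, 0 ≤ w i j) (hdiag : ∀ i, w i i = 0)
    (s : V → ℝ) (hs : ∀ i, 0 ≤ s i ∧ s i ≤ 1)
    (T T' : Finset V) (hTT' : T ⊆ T')
    (z z' : V → ℝ)
    (hz1 : ∀ i ∈ T, z i = 1)
    (hz2 : ∀ i ∉ T, z i * (1 + ∑ j, w i j) = s i + ∑ j, w i j * z j)
    (hz'1 : ∀ i ∈ T', z' i = 1)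
    (hz'2 : ∀ i ∉ T', z' i * (1 + ∑ j, w i j) = s i + ∑ j, w i j * z' j) :
    ∑ i, z i ≤ ∑ i, z' i := by
  cases isEmpty_or_nonempty V with
  | inl h => simp
  | inr h =>
    -- Step 1: z ≤ 1 everywhere (maximum principle)
    have hz_le : ∀ i, z i ≤ 1 := by
      obtain ⟨m, -, hm⟩ := Finset.exists_max_image Finset.univ z Finset.univ_nonempty
      have hm1 : z m ≤ 1 := by
        by_cases hmT : m ∈ T
        · exact le_of_eq (hz1 m hmT)
        · have heq := hz2 m hmT
          have hW : (0:ℝ) ≤ ∑ j, w m j :=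
            Finset.sum_nonneg fun j _ => hw m j
          have hsum : ∑ j, w m j * z j ≤ (∑ j, w m j) * z m := by
            rw [Finset.sum_mul]
            exact Finset.sum_le_sum fun j _ =>
              mul_le_mul_of_nonneg_left (hm j (Finset.mem_univ j)) (hw m j)
          have hsm := (hs m).2
          nlinarith [heq, hsum, hsm]
      intro i; exact le_trans (hm i (Finset.mem_univ i)) hm1
    -- Step 2: z ≤ z' pointwise (maximum principle on z - z')
    have hle : ∀ i, z i ≤ z' i := by
      obtain ⟨m, -, hm⟩ := Finset.exists_max_image Finset.univ (fun i => z i - z' i)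
        Finset.univ_nonempty
      have hm0 : z m - z' m ≤ 0 := by
        by_cases hmT : m ∈ T'
        · have := hz'1 m hmT
          have := hz_le m
          linarith
        · have hmT2 : m ∉ T := fun h => hmT (hTT' h)
          have heq := hz2 m hmT2
          have heq' := hz'2 m hmT
          have hW : (0:ℝ) ≤ ∑ j, w m j :=
            Finset.sum_nonneg fun j _ => hw m j
          have hsum : ∑ j, w m j * z j - ∑ j, w m j * z' j
              ≤ (∑ j, w m j) * (z m - z' m) := by
            rw [Finset.sum_mul, ← Finset.sum_sub_distrib]
            refine Finset.sum_le_sum fun j _ => ?_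
            have := mul_le_mul_of_nonneg_left (hm j (Finset.mem_univ j)) (hw m j)
            nlinarith [this]
          nlinarith [heq, heq', hsum]
      intro i
      have := hm i (Finset.mem_univ i)
      linarith
    exact Finset.sum_le_sum fun i _ => hle i
end

section
/- (Submodularity of the campaign objective.) Let V be a finite set, w a weight function on V, s : V → ℝ with 0 ≤ s i ≤ 1 for all i. Let T ⊆ T' ⊆ V and let j ∈ V with j ∉ T'. Let z_T, z_{T∪{j}}, z_{T'}, z_{T'∪{j}} denote the equilibria for (w, s) with respect to the target sets T, T ∪ {j}, T', T' ∪ {j}, respectively. Then g(z_{T'∪{j}}) − g(z_{T'}) ≤ g(z_{T∪{j}}) − g(z_T), where g(z) = Σ_{i ∈ V} z i. -/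
/-- `z` is a T-equilibrium for `(w, s)`. -/
def IsTEquilibrium {V : Type*} [Fintype V]
    (w : V → V → ℝ) (s : V → ℝ) (T : Finset V) (z : V → ℝ) : Prop :=
  (∀ i ∈ T, z i = 1) ∧
  (∀ i ∉ T, z i * (1 + ∑ j, w i j) = s i + ∑ j, w i j * z j)

/-- Minimum principle: if `e` is nonnegative on the boundary `B` and satisfies a
diagonally dominant relation off `B` with nonnegative source `c`, then `e ≥ 0`. -/
lemma min_principle_aux {V : Type*} [Fintype V]
    (w : V → V → ℝ) (hw : ∀ i j, 0 ≤ w i j)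
    (B : Finset V) (e c : V → ℝ) (hc : ∀ i, i ∉ B → 0 ≤ c i)
    (hB : ∀ i ∈ B, 0 ≤ e i)
    (heq : ∀ i ∉ B, e i * (1 + ∑ k, w i k) = c i + ∑ k, w i k * e k) :
    ∀ i, 0 ≤ e i := by
  by_contra h
  push_neg at h
  obtain ⟨i, hi⟩ := h
  obtain ⟨i0, -, hmin⟩ := Finset.exists_min_image Finset.univ e ⟨i, Finset.mem_univ i⟩
  have hmin' : ∀ x, e i0 ≤ e x := fun x => hmin x (Finset.mem_univ x)
  have hneg : e i0 < 0 := lt_of_le_of_lt (hmin' i) hi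
  have hi0B : i0 ∉ B := fun h => absurd (hB i0 h) (not_le.mpr hneg)
  have key := heq i0 hi0B
  have hsum : (∑ k, w i0 k) * e i0 ≤ ∑ k, w i0 k * e k := by
    rw [Finset.sum_mul]
    exact Finset.sum_le_sum fun k _ => mul_le_mul_of_nonneg_left (hmin' k) (hw i0 k)
  have hc0 := hc i0 hi0B
  nlinarith [key, hsum, hc0]

lemma equilibrium_le_one {V : Type*} [Fintype V]
    (w : V → V → ℝ) (hw : ∀ i j, 0 ≤ w i j)
    (s : V → ℝ) (hs : ∀ i, 0 ≤ s i ∧ s i ≤ 1)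
    (T : Finset V) (z : V → ℝ) (hz : IsTEquilibrium w s T z) :
    ∀ i, z i ≤ 1 := by
  have h := min_principle_aux w hw T (fun i => 1 - z i) (fun i => 1 - s i)
    (fun i _ => by linarith [(hs i).2])
    (fun i hi => by rw [hz.1 i hi]; norm_num)
    (fun i hi => by
      have heq := hz.2 i hi
      have hrw : ∑ k, w i k * (1 - z k) = (∑ k, w i k) - ∑ k, w i k * z k := by
        simp [mul_sub, Finset.sum_sub_distrib]
      rw [hrw]
      linear_combination -heq)
  intro i
  have := h i
  linarith

/-- Monotonicity: if `T ⊆ S` then `z_T ≤ z_S` pointwise. -/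
lemma equilibrium_mono {V : Type*} [Fintype V]
    (w : V → V → ℝ) (hw : ∀ i j, 0 ≤ w i j)
    (s : V → ℝ) (hs : ∀ i, 0 ≤ s i ∧ s i ≤ 1)
    (T S : Finset V) (hTS : T ⊆ S) (zT zS : V → ℝ)
    (hzT : IsTEquilibrium w s T zT) (hzS : IsTEquilibrium w s S zS) :
    ∀ i, zT i ≤ zS i := by
  have h := min_principle_aux w hw S (fun i => zS i - zT i) (fun _ => 0)
    (fun _ _ => le_refl 0)
    (fun i hi => by
      rw [hzS.1 i hi]
      linarith [equilibrium_le_one w hw s hs T zT hzT i])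
    (fun i hi => by
      have hiT : i ∉ T := fun h => hi (hTS h)
      have h1 := hzS.2 i hi
      have h2 := hzT.2 i hiT
      have hrw : ∑ k, w i k * (zS k - zT k)
          = (∑ k, w i k * zS k) - ∑ k, w i k * zT k := by
        simp [mul_sub, Finset.sum_sub_distrib]
      rw [hrw]
      linear_combination h1 - h2)
  intro i
  have := h i
  linarith

/-- submodularity of the campaign objective g(z) = Σ_i z i. -/
theorem campaign_objective_submodular
    {V : Type*} [Fintype V] [DecidableEq V] (w : V → V → ℝ)
    (hw : ∀ i j, 0 ≤ w i j) (hdiag : ∀ i, w i i = 0)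
    (s : V → ℝ) (hs : ∀ i, 0 ≤ s i ∧ s i ≤ 1)
    (T T' : Finset V) (hTT' : T ⊆ T') (j : V) (hj : j ∉ T')
    (zT zTj zT' zT'j : V → ℝ)
    (hzT : IsTEquilibrium w s T zT)
    (hzTj : IsTEquilibrium w s (insert j T) zTj)
    (hzT' : IsTEquilibrium w s T' zT')
    (hzT'j : IsTEquilibrium w s (insert j T') zT'j) :
    (∑ i, zT'j i) - (∑ i, zT' i) ≤ (∑ i, zTj i) - (∑ i, zT i) := by
  have hmono1 := equilibrium_mono w hw s hs T (insert j T)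
    (Finset.subset_insert j T) zT zTj hzT hzTj
  have hmono2 := equilibrium_mono w hw s hs T T' hTT' zT zT' hzT hzT'
  have h := min_principle_aux w hw (insert j T')
    (fun i => (zTj i - zT i) - (zT'j i - zT' i)) (fun _ => 0)
    (fun _ _ => le_refl 0)
    (fun i hi => by
      rcases Finset.mem_insert.mp hi with rfl | hiT'
      · -- i = j
        rw [hzTj.1 i (Finset.mem_insert_self i T),
            hzT'j.1 i (Finset.mem_insert_self i T')]
        linarith [hmono2 i]
      · -- i ∈ T'
        rw [hzT'.1 i hiT', hzT'j.1 i (Finset.mem_insert_of_mem hiT')]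
        by_cases hiT : i ∈ T
        · rw [hzT.1 i hiT, hzTj.1 i (Finset.mem_insert_of_mem hiT)]
          norm_num
        · simp only [sub_self, sub_zero]
          linarith [hmono1 i])
    (fun i hi => by
      have hij : i ≠ j := fun h => hi (h ▸ Finset.mem_insert_self j T')
      have hiT' : i ∉ T' := fun h => hi (Finset.mem_insert_of_mem h)
      have hiT : i ∉ T := fun h => hiT' (hTT' h)
      have hijT : i ∉ insert j T := by
        simp [Finset.mem_insert, hij, hiT]
      have h1 := hzT.2 i hiT
      have h2 := hzTj.2 i hijT
      have h3 := hzT'.2 i hiT'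
      have h4 := hzT'j.2 i hi
      have hrw : ∑ k, w i k * ((zTj k - zT k) - (zT'j k - zT' k))
          = ((∑ k, w i k * zTj k) - ∑ k, w i k * zT k)
            - ((∑ k, w i k * zT'j k) - ∑ k, w i k * zT' k) := by
        simp [mul_sub, Finset.sum_sub_distrib]
      rw [hrw]
      linear_combination h2 - h1 - h4 + h3)
  have hsum : (0:ℝ) ≤ ∑ i, ((zTj i - zT i) - (zT'j i - zT' i)) :=
    Finset.sum_nonneg fun i _ => h i
  have hexp : ∑ i, ((zTj i - zT i) - (zT'j i - zT' i))
      = ((∑ i, zTj i) - ∑ i, zT i) - ((∑ i, zT'j i) - ∑ i, zT' i) := by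
    simp [Finset.sum_sub_distrib]
  linarith [hexp ▸ hsum]
end

section
/- (Marginal change identity.) Let V be a finite set, w a weight function on V, s : V → ℝ, T ⊆ V and j ∈ V with j ∉ T. Let z be the T-equilibrium and z' the (T ∪ {j})-equilibrium for (w, s), and let h : V → ℝ be the absorption vector for (T, j), i.e., the unique vector with h j = 1, h t = 0 for every t ∈ T, and h i · (1 + W i) = Σ_{l ∈ V} w i l · h l for every i ∉ T ∪ {j}. Then for every node i ∈ V, z' i − z i = h i · (1 − z j). -/
/-- `h` is the absorption vector for `(T, j)`: the probability that the absorbing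
walk started at `i` is absorbed at `j`. -/
def IsAbsorptionVector {V : Type*} [Fintype V]
    (w : V → V → ℝ) (T : Finset V) (j : V) (h : V → ℝ) : Prop :=
  h j = 1 ∧ (∀ t ∈ T, h t = 0) ∧
  (∀ i, i ∉ T → i ≠ j → h i * (1 + ∑ l, w i l) = ∑ l, w i l * h l)

/-- marginal change identity z' i − z i = h i · (1 − z j). -/
theorem campaign_marginal_change_identity
    {V : Type*} [Fintype V] [DecidableEq V] (w : V → V → ℝ)
    (hw : ∀ i j, 0 ≤ w i j) (hdiag : ∀ i, w i i = 0)
    (s : V → ℝ) (T : Finset V) (j : V) (hj : j ∉ T)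
    (z z' h : V → ℝ)
    (hz : IsTEquilibrium w s T z)
    (hz' : IsTEquilibrium w s (insert j T) z')
    (hh : IsAbsorptionVector w T j h) :
    ∀ i : V, z' i - z i = h i * (1 - z j) := by
  obtain ⟨hzT, hzE⟩ := hz
  obtain ⟨hz'T, hz'E⟩ := hz'
  obtain ⟨hhj, hhT, hhE⟩ := hh
  set d : V → ℝ := fun i => z' i - z i - h i * (1 - z j) with hd
  have hdT : ∀ t ∈ T, d t = 0 := by
    intro t ht
    simp [hd, hzT t ht, hz'T t (Finset.mem_insert_of_mem ht), hhT t ht]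
  have hdj : d j = 0 := by
    simp [hd, hz'T j (Finset.mem_insert_self j T), hhj]
  have hrec : ∀ i, i ∉ T → i ≠ j → d i * (1 + ∑ l, w i l) = ∑ l, w i l * d l := by
    intro i hiT hij
    have e1 := hzE i hiT
    have e2 := hz'E i (by simp [Finset.mem_insert, hij, hiT])
    have e3 := hhE i hiT hij
    have hsum : ∑ l, w i l * d l
        = (∑ l, w i l * z' l) - (∑ l, w i l * z l)
          - (1 - z j) * (∑ l, w i l * h l) := by
      rw [Finset.mul_sum, ← Finset.sum_sub_distrib, ← Finset.sum_sub_distrib]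
      exact Finset.sum_congr rfl fun l _ => by simp only [hd]; ring
    rw [hsum]
    simp only [hd]
    linear_combination e2 - e1 - (1 - z j) * e3
  have hne : (Finset.univ : Finset V).Nonempty := ⟨j, Finset.mem_univ j⟩
  obtain ⟨i0, -, hmax⟩ := Finset.exists_max_image Finset.univ (fun i => |d i|) hne
  have h0 : d i0 = 0 := by
    by_contra hne0
    have hiT : i0 ∉ T := fun ht => hne0 (hdT i0 ht)
    have hij : i0 ≠ j := fun he => hne0 (he ▸ hdj)
    have e := hrec i0 hiT hij
    have hW : 0 ≤ ∑ l, w i0 l := Finset.sum_nonneg fun l _ => hw i0 l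
    have habs : |d i0| * (1 + ∑ l, w i0 l) ≤ (∑ l, w i0 l) * |d i0| := by
      calc |d i0| * (1 + ∑ l, w i0 l) = |d i0 * (1 + ∑ l, w i0 l)| := by
            rw [abs_mul, abs_of_nonneg (show (0:ℝ) ≤ 1 + ∑ l, w i0 l by linarith)]
        _ = |∑ l, w i0 l * d l| := by rw [e]
        _ ≤ ∑ l, |w i0 l * d l| := Finset.abs_sum_le_sum_abs _ _
        _ ≤ ∑ l, w i0 l * |d i0| := Finset.sum_le_sum fun l _ => by
              rw [abs_mul, abs_of_nonneg (hw i0 l)]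
              exact mul_le_mul_of_nonneg_left (hmax l (Finset.mem_univ l)) (hw i0 l)
        _ = (∑ l, w i0 l) * |d i0| := by rw [← Finset.sum_mul]
    have hpos : 0 < |d i0| := abs_pos.mpr hne0
    nlinarith
  intro i
  have hle : |d i| ≤ |d i0| := hmax i (Finset.mem_univ i)
  rw [h0, abs_zero] at hle
  have hdi : d i = 0 := abs_eq_zero.mp (le_antisymm hle (abs_nonneg _))
  simp only [hd] at hdi
  linarith
end

section
/- (Marginal gain formula.) Let V be a finite set, w a weight function on V, s : V → ℝ, T ⊆ V and j ∈ V with j ∉ T. Let z be the T-equilibrium and z' the (T ∪ {j})-equilibrium for (w, s), and let h be the absorption vector for (T, j). Then g(z') − g(z) = (1 − z j) · Σ_{i ∈ V} h i, where g(z) = Σ_{i ∈ V} z i. -/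
/-- marginal gain formula g(z') − g(z) = (1 − z j) · Σ_i h i. -/
theorem campaign_marginal_gain_formula
    {V : Type*} [Fintype V] [DecidableEq V] (w : V → V → ℝ)
    (hw : ∀ i j, 0 ≤ w i j) (hdiag : ∀ i, w i i = 0)
    (s : V → ℝ) (T : Finset V) (j : V) (hj : j ∉ T)
    (z z' h : V → ℝ)
    (hz : IsTEquilibrium w s T z)
    (hz' : IsTEquilibrium w s (insert j T) z')
    (hh : IsAbsorptionVector w T j h) :
    (∑ i, z' i) - (∑ i, z i) = (1 - z j) * ∑ i, h i := by
  obtain ⟨hzT, hzE⟩ := hz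
  obtain ⟨hz'T, hz'E⟩ := hz'
  obtain ⟨hhj, hhT, hhE⟩ := hh
  set e : V → ℝ := fun i => z' i - z i - (1 - z j) * h i with he
  have heT : ∀ t ∈ T, e t = 0 := by
    intro t ht
    simp [he, hz'T t (Finset.mem_insert_of_mem ht), hzT t ht, hhT t ht]
  have hej : e j = 0 := by
    simp only [he, hz'T j (Finset.mem_insert_self j T), hhj]
    ring
  have heE : ∀ i, i ∉ T → i ≠ j → e i * (1 + ∑ l, w i l) = ∑ l, w i l * e l := by
    intro i hiT hij
    have h1 := hz'E i (by simp [Finset.mem_insert, hij, hiT])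
    have h2 := hzE i hiT
    have h3 := hhE i hiT hij
    have hsum : ∑ l, w i l * e l =
        (∑ l, w i l * z' l) - (∑ l, w i l * z l) - (1 - z j) * (∑ l, w i l * h l) := by
      simp only [he, Finset.mul_sum]
      rw [← Finset.sum_sub_distrib, ← Finset.sum_sub_distrib]
      exact Finset.sum_congr rfl fun l _ => by ring
    have hexp : e i * (1 + ∑ l, w i l) =
        z' i * (1 + ∑ l, w i l) - z i * (1 + ∑ l, w i l)
          - (1 - z j) * (h i * (1 + ∑ l, w i l)) := by
      simp only [he]; ring
    rw [hsum, hexp, h1, h2, h3]; ring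
  have hzero : ∀ i, e i = 0 := by
    have hne : (Finset.univ : Finset V).Nonempty := ⟨j, Finset.mem_univ j⟩
    obtain ⟨i0, -, hi0⟩ := Finset.exists_max_image Finset.univ (fun i => |e i|) hne
    have hmax : ∀ i, |e i| ≤ |e i0| := fun i => hi0 i (Finset.mem_univ i)
    have he0 : e i0 = 0 := by
      by_cases hT : i0 ∈ T
      · exact heT i0 hT
      by_cases hJ : i0 = j
      · rw [hJ]; exact hej
      · have hE := heE i0 hT hJ
        have hWnn : 0 ≤ ∑ l, w i0 l := Finset.sum_nonneg fun l _ => hw i0 l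
        have habs : |e i0| * (1 + ∑ l, w i0 l) ≤ (∑ l, w i0 l) * |e i0| := by
          have h1 : |e i0 * (1 + ∑ l, w i0 l)| = |e i0| * (1 + ∑ l, w i0 l) := by
            rw [abs_mul, abs_of_nonneg (show (0:ℝ) ≤ 1 + ∑ l, w i0 l by linarith)]
          calc |e i0| * (1 + ∑ l, w i0 l) = |∑ l, w i0 l * e l| := by rw [← h1, hE]
            _ ≤ ∑ l, |w i0 l * e l| := Finset.abs_sum_le_sum_abs _ _
            _ ≤ ∑ l, w i0 l * |e i0| := by
                apply Finset.sum_le_sum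
                intro l _
                rw [abs_mul, abs_of_nonneg (hw i0 l)]
                exact mul_le_mul_of_nonneg_left (hmax l) (hw i0 l)
            _ = (∑ l, w i0 l) * |e i0| := by rw [← Finset.sum_mul]
        have : |e i0| ≤ 0 := by nlinarith [abs_nonneg (e i0)]
        exact abs_eq_zero.mp (le_antisymm this (abs_nonneg _))
    intro i
    have := hmax i
    rw [he0, abs_zero] at this
    exact abs_eq_zero.mp (le_antisymm this (abs_nonneg _))
  have hsplit : ∀ i, z' i - z i = (1 - z j) * h i := by
    intro i
    have := hzero i
    simp only [he] at this
    linarith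
  calc (∑ i, z' i) - (∑ i, z i) = ∑ i, (z' i - z i) := by rw [Finset.sum_sub_distrib]
    _ = ∑ i, (1 - z j) * h i := Finset.sum_congr rfl fun i _ => hsplit i
    _ = (1 - z j) * ∑ i, h i := by rw [Finset.mul_sum]
end

section
/- (Monotonicity of absorption probabilities.) Let V be a finite set, w a weight function on V, T ⊆ T' ⊆ V, and j ∈ V with j ∉ T'. Let h be the absorption vector for (T, j) and h' the absorption vector for (T', j). Then 0 ≤ h' i ≤ h i ≤ 1 for every node i ∈ V. -/
/-- Minimum principle: a superharmonic-like function that is nonnegative on the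
boundary `S` is nonnegative everywhere. -/
lemma campaign_min_principle {V : Type*} [Fintype V] (w : V → V → ℝ)
    (hw : ∀ i j, 0 ≤ w i j) (S : Finset V) (g : V → ℝ)
    (hbd : ∀ s ∈ S, 0 ≤ g s)
    (hint : ∀ i ∉ S, ∑ l, w i l * g l ≤ g i * (1 + ∑ l, w i l)) :
    ∀ i, 0 ≤ g i := by
  intro i
  obtain ⟨i0, -, hmin⟩ := Finset.exists_min_image Finset.univ g ⟨i, Finset.mem_univ i⟩
  have key : 0 ≤ g i0 := by
    by_cases hS : i0 ∈ S
    · exact hbd i0 hS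
    · have h1 := hint i0 hS
      have h2 : ∑ l, w i0 l * g i0 ≤ ∑ l, w i0 l * g l :=
        Finset.sum_le_sum fun l _ =>
          mul_le_mul_of_nonneg_left (hmin l (Finset.mem_univ l)) (hw i0 l)
      have h3 : ∑ l, w i0 l * g i0 = (∑ l, w i0 l) * g i0 := by
        rw [Finset.sum_mul]
      nlinarith [h1, h2, h3]
  exact le_trans key (hmin i (Finset.mem_univ i))

/-- monotonicity of absorption probabilities:
0 ≤ h' i ≤ h i ≤ 1 when T ⊆ T'. -/
theorem campaign_absorption_monotone
    {V : Type*} [Fintype V] (w : V → V → ℝ)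
    (hw : ∀ i j, 0 ≤ w i j) (hdiag : ∀ i, w i i = 0)
    (T T' : Finset V) (hTT' : T ⊆ T') (j : V) (hj : j ∉ T')
    (h h' : V → ℝ)
    (hh : IsAbsorptionVector w T j h)
    (hh' : IsAbsorptionVector w T' j h') :
    ∀ i : V, 0 ≤ h' i ∧ h' i ≤ h i ∧ h i ≤ 1 := by
  classical
  obtain ⟨hj1, hT0, heq⟩ := hh
  obtain ⟨hj1', hT0', heq'⟩ := hh'
  have hjT : j ∉ T := fun hmem => hj (hTT' hmem)
  -- 0 ≤ h
  have hge0 : ∀ i, 0 ≤ h i := by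
    apply campaign_min_principle w hw (insert j T) h
    · intro s hs
      rcases Finset.mem_insert.mp hs with rfl | hs
      · rw [hj1]; norm_num
      · rw [hT0 s hs]
    · intro i hi
      rw [Finset.mem_insert, not_or] at hi
      exact le_of_eq (heq i hi.2 hi.1).symm
  -- 0 ≤ h'
  have hge0' : ∀ i, 0 ≤ h' i := by
    apply campaign_min_principle w hw (insert j T') h'
    · intro s hs
      rcases Finset.mem_insert.mp hs with rfl | hs
      · rw [hj1']; norm_num
      · rw [hT0' s hs]
    · intro i hi
      rw [Finset.mem_insert, not_or] at hi
      exact le_of_eq (heq' i hi.2 hi.1).symm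
  -- h ≤ 1
  have hle1 : ∀ i, h i ≤ 1 := by
    have := campaign_min_principle w hw (insert j T) (fun i => 1 - h i) ?_ ?_
    · intro i; have := this i; simp at this; linarith
    · intro s hs
      rcases Finset.mem_insert.mp hs with rfl | hs
      · simp [hj1]
      · simp [hT0 s hs]
    · intro i hi
      rw [Finset.mem_insert, not_or] at hi
      have e := heq i hi.2 hi.1
      have hWnn : 0 ≤ ∑ l, w i l := Finset.sum_nonneg fun l _ => hw i l
      have : ∑ l, w i l * (1 - h l) = (∑ l, w i l) - ∑ l, w i l * h l := by
        rw [← Finset.sum_sub_distrib]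
        congr 1; ext l; ring
      rw [this]
      nlinarith [e, hWnn]
  -- h' ≤ h
  have hmono : ∀ i, h' i ≤ h i := by
    have := campaign_min_principle w hw (insert j T') (fun i => h i - h' i) ?_ ?_
    · intro i; have := this i; simp at this; linarith
    · intro s hs
      rcases Finset.mem_insert.mp hs with rfl | hs
      · simp [hj1, hj1']
      · simp only [hT0' s hs, sub_zero]; exact hge0 s
    · intro i hi
      rw [Finset.mem_insert, not_or] at hi
      have e' := heq' i hi.2 hi.1
      have e := heq i (fun hmem => hi.2 (hTT' hmem)) hi.1
      have : ∑ l, w i l * (h l - h' l) = (∑ l, w i l * h l) - ∑ l, w i l * h' l := by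
        rw [← Finset.sum_sub_distrib]
        congr 1; ext l; ring
      rw [this]
      nlinarith [e, e']
  exact fun i => ⟨hge0' i, hmono i, hle1 i⟩
end

section
/- (Independence of the overall opinion from the network structure.) Let V be a finite set, s : V → ℝ, and let w and w' be two symmetric weight functions on V. If z is the unconstrained equilibrium for (w, s) and z' is the unconstrained equilibrium for (w', s), then Σ_{i ∈ V} z i = Σ_{i ∈ V} z' i. In particular, adding or removing edges in an undirected social graph does not change the overall opinion g(z). -/
lemma sum_eq_sum_s {V : Type*} [Fintype V] (w : V → V → ℝ)
    (hsymm : ∀ i j, w i j = w j i) (s z : V → ℝ)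
    (heq : ∀ i, z i * (1 + ∑ j, w i j) = s i + ∑ j, w i j * z j) :
    ∑ i, z i = ∑ i, s i := by
  have h : ∑ i, (z i * (1 + ∑ j, w i j)) = ∑ i, (s i + ∑ j, w i j * z j) :=
    Finset.sum_congr rfl (fun i _ => heq i)
  simp only [mul_add, mul_one, Finset.sum_add_distrib, Finset.mul_sum] at h
  have key : ∑ i, ∑ j, z i * w i j = ∑ i, ∑ j, w i j * z j := by
    rw [Finset.sum_comm]
    exact Finset.sum_congr rfl fun j _ => Finset.sum_congr rfl fun i _ => by
      rw [hsymm i j]; ring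
  linarith [h, key]

/-- the overall opinion at the unconstrained equilibrium is
independent of the (undirected) network structure. -/
theorem campaign_overall_opinion_network_independent
    {V : Type*} [Fintype V] (w w' : V → V → ℝ)
    (hsymm : ∀ i j, w i j = w j i) (hw : ∀ i j, 0 ≤ w i j) (hdiag : ∀ i, w i i = 0)
    (hsymm' : ∀ i j, w' i j = w' j i) (hw' : ∀ i j, 0 ≤ w' i j) (hdiag' : ∀ i, w' i i = 0)
    (s : V → ℝ) (z z' : V → ℝ)
    (heq : ∀ i, z i * (1 + ∑ j, w i j) = s i + ∑ j, w i j * z j)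
    (heq' : ∀ i, z' i * (1 + ∑ j, w' i j) = s i + ∑ j, w' i j * z' j) :
    ∑ i, z i = ∑ i, z' i := by
  rw [sum_eq_sum_s w hsymm s z heq, sum_eq_sum_s w' hsymm' s z' heq']
end

section
/- (Optimal solution of the i-Campaign problem.) Let V be a finite set, s : V → ℝ, and let k ≤ |V|. Let S₀ ⊆ V with |S₀| = k be such that s i ≤ s j for every i ∈ S₀ and j ∉ S₀ (S₀ consists of k nodes with the smallest internal opinions). Then for every S ⊆ V with |S| = k, Σ_{i ∈ V} (if i ∈ S then 1 else s i) ≤ Σ_{i ∈ V} (if i ∈ S₀ then 1 else s i). That is, setting the k smallest internal opinions to 1 maximizes the sum of internal opinions, and hence (by the opinion-sum invariant) the overall opinion g(z). -/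
/-- If |A| = |B| and every element of A has value ≤ every element of B,
then the sum over A is ≤ the sum over B. -/
lemma sum_le_sum_of_pairwise_le {V : Type*} [DecidableEq V] (s : V → ℝ)
    (A B : Finset V) (hcard : A.card = B.card)
    (h : ∀ a ∈ A, ∀ b ∈ B, s a ≤ s b) :
    ∑ i ∈ A, s i ≤ ∑ i ∈ B, s i := by
  rcases Nat.eq_zero_or_pos A.card with h0 | hpos
  · simp [Finset.card_eq_zero.mp h0, Finset.card_eq_zero.mp (hcard ▸ h0)]
  have key : (B.card : ℝ) * ∑ i ∈ A, s i ≤ (A.card : ℝ) * ∑ i ∈ B, s i := by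
    calc (B.card : ℝ) * ∑ i ∈ A, s i = ∑ a ∈ A, ∑ _b ∈ B, s a := by
          simp [Finset.sum_const, Finset.sum_mul, mul_comm]
      _ ≤ ∑ a ∈ A, ∑ b ∈ B, s b := by
          refine Finset.sum_le_sum fun a ha => Finset.sum_le_sum fun b hb => h a ha b hb
      _ = (A.card : ℝ) * ∑ i ∈ B, s i := by
          simp [Finset.sum_const, Finset.mul_sum]
  rw [hcard] at key
  have hBpos : (0:ℝ) < B.card := by exact_mod_cast (hcard ▸ hpos)
  exact le_of_mul_le_mul_left key hBpos

/-- in the i-Campaign problem, setting the k smallest internal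
opinions to 1 maximizes the sum of internal opinions. -/
theorem iCampaign_optimal_min_s
    {V : Type*} [Fintype V] [DecidableEq V] (s : V → ℝ) (k : ℕ)
    (hk : k ≤ Fintype.card V)
    (S₀ : Finset V) (hcard₀ : S₀.card = k)
    (hmin : ∀ i ∈ S₀, ∀ j ∉ S₀, s i ≤ s j) :
    ∀ S : Finset V, S.card = k →
      (∑ i, if i ∈ S then (1 : ℝ) else s i) ≤ ∑ i, if i ∈ S₀ then (1 : ℝ) else s i := by
  intro S hS
  -- rewrite both sides as ∑ s + ∑_{T} (1 - s)
  have expand : ∀ T : Finset V, (∑ i, if i ∈ T then (1 : ℝ) else s i)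
      = (∑ i, s i) + (T.card : ℝ) - ∑ i ∈ T, s i := by
    intro T
    have : ∀ i, (if i ∈ T then (1 : ℝ) else s i)
        = s i + (if i ∈ T then (1 : ℝ) - s i else 0) := by
      intro i; by_cases h : i ∈ T <;> simp [h]
    rw [Finset.sum_congr rfl fun i _ => this i, Finset.sum_add_distrib,
      Finset.sum_ite_mem, Finset.univ_inter, Finset.sum_sub_distrib,
      Finset.sum_const, nsmul_eq_mul, mul_one]
    ring
  rw [expand S, expand S₀, hS, hcard₀]
  have hsum : ∑ i ∈ S₀, s i ≤ ∑ i ∈ S, s i := by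
    have h1 : ∑ i ∈ S₀ ∩ S, s i + ∑ i ∈ S₀ \ S, s i = ∑ i ∈ S₀, s i :=
      Finset.sum_inter_add_sum_sdiff S₀ S s
    have h2 : ∑ i ∈ S ∩ S₀, s i + ∑ i ∈ S \ S₀, s i = ∑ i ∈ S, s i :=
      Finset.sum_inter_add_sum_sdiff S S₀ s
    have hic : S₀ ∩ S = S ∩ S₀ := Finset.inter_comm _ _
    have hcards : (S₀ \ S).card = (S \ S₀).card := by
      have e1 := Finset.card_inter_add_card_sdiff S₀ S
      have e2 := Finset.card_inter_add_card_sdiff S S₀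
      rw [Finset.inter_comm] at e1
      omega
    have hkey : ∑ i ∈ S₀ \ S, s i ≤ ∑ i ∈ S \ S₀, s i := by
      refine sum_le_sum_of_pairwise_le s _ _ hcards ?_
      intro a ha b hb
      exact hmin a (Finset.mem_sdiff.mp ha).1 b (Finset.mem_sdiff.mp hb).2
    rw [← h1, ← h2, hic]
    linarith
  linarith
end

section
/- (Vertex-cover reduction, forward direction.) Let V be a finite set and w a symmetric weight function on V taking values in {0, 1} with w i i = 0, such that the associated graph is d-regular for some d ≥ 1 (that is, W i = d for every i ∈ V). Let s i = 0 for all i, let T ⊆ V, and let z be the T-equilibrium for (w, s). If T is a vertex cover (for every i, j with w i j = 1, i ∈ T or j ∈ T), then z j = d / (d + 1) for every j ∉ T, and hence Σ_{i ∈ V} z i = |T| + (|V| − |T|) · d / (d + 1). -/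
/-- vertex-cover reduction, forward direction. -/
theorem campaign_vertex_cover_forward
    {V : Type*} [Fintype V] [DecidableEq V] (w : V → V → ℝ)
    (hsymm : ∀ i j, w i j = w j i) (hdiag : ∀ i, w i i = 0)
    (hval : ∀ i j, w i j = 0 ∨ w i j = 1)
    (d : ℕ) (hd : 1 ≤ d) (hreg : ∀ i, ∑ j, w i j = (d : ℝ))
    (s : V → ℝ) (hs : ∀ i, s i = 0)
    (T : Finset V) (z : V → ℝ)
    (hz1 : ∀ i ∈ T, z i = 1)
    (hz2 : ∀ i ∉ T, z i * (1 + ∑ j, w i j) = s i + ∑ j, w i j * z j)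
    (hvc : ∀ i j, w i j = 1 → i ∈ T ∨ j ∈ T) :
    (∀ j ∉ T, z j = (d : ℝ) / (d + 1)) ∧
    ∑ i, z i = (T.card : ℝ) + ((Fintype.card V : ℝ) - T.card) * ((d : ℝ) / (d + 1)) := by
  have hdpos : (0:ℝ) < (d:ℝ) + 1 := by positivity
  have key : ∀ j ∉ T, z j = (d : ℝ) / (d + 1) := by
    intro i hi
    have hsum : ∑ j, w i j * z j = ∑ j, w i j := by
      apply Finset.sum_congr rfl
      intro j _
      rcases hval i j with h | h
      · simp [h]
      · rcases hvc i j h with hT | hT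
        · exact absurd hT hi
        · rw [hz1 j hT, mul_one]
    have h2 := hz2 i hi
    rw [hs, hsum, hreg, zero_add] at h2
    field_simp
    linarith
  refine ⟨key, ?_⟩
  rw [← Finset.sum_add_sum_compl T]
  have h1 : ∑ i ∈ T, z i = (T.card : ℝ) := by
    rw [Finset.sum_congr rfl hz1]; simp
  have h2 : ∑ i ∈ Tᶜ, z i = ((Fintype.card V : ℝ) - T.card) * ((d : ℝ) / (d + 1)) := by
    rw [Finset.sum_congr rfl (fun i hi => key i (Finset.mem_compl.mp hi))]
    rw [Finset.sum_const, Finset.card_compl, nsmul_eq_mul]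
    have : (T.card : ℝ) ≤ (Fintype.card V : ℝ) := by
      exact_mod_cast Finset.card_le_univ T
    push_cast [Finset.card_le_univ T]
    ring
  rw [h1, h2]
end

section
/- (Vertex-cover reduction, converse direction.) Let V be a finite set and w a symmetric weight function on V taking values in {0, 1} with w i i = 0, such that W i = d for every i ∈ V for some d ≥ 1. Let s i = 0 for all i, let T ⊆ V, and let z be the T-equilibrium for (w, s). If T is not a vertex cover, i.e., there exist j, ℓ ∉ T with w j ℓ = 1, then z j < d / (d + 1), and consequently Σ_{i ∈ V} z i < |T| + (|V| − |T|) · d / (d + 1). -/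
/-- vertex-cover reduction, converse direction. -/
theorem campaign_vertex_cover_converse
    {V : Type*} [Fintype V] [DecidableEq V] (w : V → V → ℝ)
    (hsymm : ∀ i j, w i j = w j i) (hdiag : ∀ i, w i i = 0)
    (hval : ∀ i j, w i j = 0 ∨ w i j = 1)
    (d : ℕ) (hd : 1 ≤ d) (hreg : ∀ i, ∑ j, w i j = (d : ℝ))
    (s : V → ℝ) (hs : ∀ i, s i = 0)
    (T : Finset V) (z : V → ℝ)
    (hz1 : ∀ i ∈ T, z i = 1)
    (hz2 : ∀ i ∉ T, z i * (1 + ∑ j, w i j) = s i + ∑ j, w i j * z j) :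
    ∀ j ℓ : V, j ∉ T → ℓ ∉ T → w j ℓ = 1 →
      z j < (d : ℝ) / (d + 1) ∧
      ∑ i, z i < (T.card : ℝ) + ((Fintype.card V : ℝ) - T.card) * ((d : ℝ) / (d + 1)) := by
  intro j ℓ hj hℓ hw
  have hw0 : ∀ i k, 0 ≤ w i k := by
    intro i k; rcases hval i k with h | h <;> simp [h]
  have hd1 : (1 : ℝ) ≤ (d : ℝ) := by exact_mod_cast hd
  have hdp : (0 : ℝ) < (d : ℝ) + 1 := by linarith
  have heq : ∀ i ∉ T, z i * (1 + (d : ℝ)) = ∑ k, w i k * z k := by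
    intro i hi
    have := hz2 i hi
    rw [hreg i, hs i] at this
    linarith [this]
  -- max principle : z ≤ 1 everywhere
  have hle1 : ∀ k, z k ≤ 1 := by
    obtain ⟨m, _, hm⟩ := Finset.exists_max_image Finset.univ z ⟨j, Finset.mem_univ j⟩
    have hm' : ∀ k, z k ≤ z m := fun k => hm k (Finset.mem_univ k)
    by_cases hmT : m ∈ T
    · intro k; rw [← hz1 m hmT]; exact hm' k
    · have h1 : z m * (1 + (d : ℝ)) = ∑ k, w m k * z k := heq m hmT
      have h2 : ∑ k, w m k * z k ≤ ∑ k, w m k * z m :=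
        Finset.sum_le_sum fun k _ => mul_le_mul_of_nonneg_left (hm' k) (hw0 m k)
      have h3 : ∑ k, w m k * z m = (d : ℝ) * z m := by
        rw [← Finset.sum_mul, hreg m]
      have hm0 : z m ≤ 0 := by nlinarith
      intro k; linarith [hm' k]
  -- bound for vertices outside T
  have hbound : ∀ i ∉ T, z i ≤ (d : ℝ) / (d + 1) := by
    intro i hi
    have h1 : z i * (1 + (d : ℝ)) = ∑ k, w i k * z k := heq i hi
    have h2 : ∑ k, w i k * z k ≤ ∑ k, w i k :=
      Finset.sum_le_sum fun k _ => by
        nlinarith [hw0 i k, hle1 k]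
    rw [hreg i] at h2
    rw [le_div_iff₀ hdp]; nlinarith
  -- strict bound at j
  have hstrict : z j < (d : ℝ) / (d + 1) := by
    have h1 : z j * (1 + (d : ℝ)) = ∑ k, w j k * z k := heq j hj
    have hsplit : ∑ k, w j k * z k =
        (∑ k ∈ Finset.univ.erase ℓ, w j k * z k) + w j ℓ * z ℓ := by
      rw [Finset.sum_erase_add _ _ (Finset.mem_univ ℓ)]
    have h2 : ∑ k ∈ Finset.univ.erase ℓ, w j k * z k ≤
        ∑ k ∈ Finset.univ.erase ℓ, w j k :=
      Finset.sum_le_sum fun k _ => by nlinarith [hw0 j k, hle1 k]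
    have h3 : ∑ k ∈ Finset.univ.erase ℓ, w j k = (d : ℝ) - 1 := by
      have := Finset.sum_erase_add Finset.univ (w j) (Finset.mem_univ ℓ)
      rw [hreg j] at this
      rw [hw] at this
      linarith
    have hℓlt : z ℓ < 1 := by
      have := hbound ℓ hℓ
      have hx : (d : ℝ) / (d + 1) < 1 := by
        rw [div_lt_one hdp]; linarith
      linarith
    have h4 : ∑ k, w j k * z k < (d : ℝ) := by
      rw [hsplit, hw]; linarith
    rw [lt_div_iff₀ hdp]; nlinarith
  refine ⟨hstrict, ?_⟩
  have hsplit : ∑ i, z i = (∑ i ∈ T, z i) + ∑ i ∈ Tᶜ, z i :=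
    (Finset.sum_add_sum_compl T z).symm
  have hT : ∑ i ∈ T, z i = (T.card : ℝ) := by
    rw [Finset.sum_congr rfl hz1]; simp
  have hjc : j ∈ Tᶜ := Finset.mem_compl.mpr hj
  have hTc : ∑ i ∈ Tᶜ, z i < ∑ i ∈ Tᶜ, (d : ℝ) / (d + 1) := by
    apply Finset.sum_lt_sum
    · intro i hi; exact hbound i (Finset.mem_compl.mp hi)
    · exact ⟨j, hjc, hstrict⟩
  have hcard : (Tᶜ.card : ℝ) = (Fintype.card V : ℝ) - T.card := by
    rw [Finset.card_compl]
    exact_mod_cast Nat.cast_sub (Finset.card_le_univ T)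
  rw [hsplit, hT]
  have : ∑ i ∈ Tᶜ, (d : ℝ) / (d + 1) = (Tᶜ.card : ℝ) * ((d : ℝ) / (d + 1)) := by
    rw [Finset.sum_const, nsmul_eq_mul]
  rw [this, hcard] at hTc
  linarith
end

section
/- (Contraction property of the averaging update.) Let V be a nonempty finite set, w a weight function on V, s : V → ℝ, and T ⊆ V. Define the update map F : (V → ℝ) → (V → ℝ) by F(z) i = 1 if i ∈ T, and F(z) i = (s i + Σ_{j ∈ V} w i j · z j) / (1 + W i) if i ∉ T. Then for all z, z' : V → ℝ, max_{i ∈ V} |F(z) i − F(z') i| ≤ c · max_{i ∈ V} |z i − z' i|, where c = max_{i ∈ V} W i / (1 + W i) < 1. -/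
/-- The averaging update map: target nodes are fixed to 1, every other node
takes a weighted average of its internal opinion and its neighbors' opinions. -/
noncomputable def updateF {V : Type*} [Fintype V] [DecidableEq V]
    (w : V → V → ℝ) (s : V → ℝ) (T : Finset V) (z : V → ℝ) : V → ℝ :=
  fun i => if i ∈ T then 1 else (s i + ∑ j, w i j * z j) / (1 + ∑ j, w i j)

/-- the averaging update is a contraction in the sup norm with
contraction factor c = max_i W i / (1 + W i) < 1. -/
theorem campaign_update_contraction
    {V : Type*} [Fintype V] [DecidableEq V] [Nonempty V] (w : V → V → ℝ)
    (hw : ∀ i j, 0 ≤ w i j) (hdiag : ∀ i, w i i = 0)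
    (s : V → ℝ) (T : Finset V) :
    (Finset.univ.sup' Finset.univ_nonempty
        (fun i => (∑ j, w i j) / (1 + ∑ j, w i j))) < 1 ∧
    ∀ z z' : V → ℝ,
      Finset.univ.sup' Finset.univ_nonempty
          (fun i => |updateF w s T z i - updateF w s T z' i|) ≤
        (Finset.univ.sup' Finset.univ_nonempty
            (fun i => (∑ j, w i j) / (1 + ∑ j, w i j))) *
          Finset.univ.sup' Finset.univ_nonempty (fun i => |z i - z' i|) := by
  have hW : ∀ i : V, (0:ℝ) ≤ ∑ j, w i j := fun i =>
    Finset.sum_nonneg fun j _ => hw i j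
  have hpos : ∀ i : V, (0:ℝ) < 1 + ∑ j, w i j := fun i => by linarith [hW i]
  set c := Finset.univ.sup' Finset.univ_nonempty
      (fun i => (∑ j, w i j) / (1 + ∑ j, w i j)) with hc
  have hc_nonneg : 0 ≤ c := by
    obtain ⟨i⟩ := ‹Nonempty V›
    exact le_trans (div_nonneg (hW i) (hpos i).le)
      (Finset.le_sup' (fun i => (∑ j, w i j) / (1 + ∑ j, w i j)) (Finset.mem_univ i))
  constructor
  · rw [Finset.sup'_lt_iff]
    intro i _
    rw [div_lt_one (hpos i)]
    linarith [hW i]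
  · intro z z'
    set M := Finset.univ.sup' Finset.univ_nonempty (fun i => |z i - z' i|) with hM
    have hM_nonneg : 0 ≤ M := by
      obtain ⟨i⟩ := ‹Nonempty V›
      exact le_trans (abs_nonneg (z i - z' i)) (Finset.le_sup' (fun i => |z i - z' i|) (Finset.mem_univ i))
    rw [Finset.sup'_le_iff]
    intro i _
    by_cases hi : i ∈ T
    · simp [updateF, hi]
      positivity
    · simp only [updateF, if_neg hi]
      rw [div_sub_div_same, add_sub_add_left_eq_sub, ← Finset.sum_sub_distrib]
      have h1 : |∑ j, (w i j * z j - w i j * z' j)| ≤ (∑ j, w i j) * M := by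
        calc |∑ j, (w i j * z j - w i j * z' j)|
            ≤ ∑ j, |w i j * z j - w i j * z' j| := Finset.abs_sum_le_sum_abs _ _
          _ ≤ ∑ j, w i j * M := by
              apply Finset.sum_le_sum
              intro j _
              rw [← mul_sub, abs_mul, abs_of_nonneg (hw i j)]
              exact mul_le_mul_of_nonneg_left
                (Finset.le_sup' (fun k => |z k - z' k|) (Finset.mem_univ j)) (hw i j)
          _ = (∑ j, w i j) * M := by rw [Finset.sum_mul]
      rw [abs_div, abs_of_pos (hpos i), div_le_iff₀ (hpos i)]
      calc |∑ j, (w i j * z j - w i j * z' j)| ≤ (∑ j, w i j) * M := h1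
        _ = ((∑ j, w i j) / (1 + ∑ j, w i j)) * M * (1 + ∑ j, w i j) := by
            field_simp
            rw [mul_div_assoc, div_self (hpos i).ne', mul_one]
        _ ≤ c * M * (1 + ∑ j, w i j) := by
            apply mul_le_mul_of_nonneg_right _ (hpos i).le
            exact mul_le_mul_of_nonneg_right
              (Finset.le_sup' (fun i => (∑ j, w i j) / (1 + ∑ j, w i j)) (Finset.mem_univ i)) hM_nonneg
end

section
/- (Convergence of the power iteration to the equilibrium.) Let V be a nonempty finite set, w a weight function on V, s : V → ℝ, and T ⊆ V. Define the update map F : (V → ℝ) → (V → ℝ) by F(z) i = 1 if i ∈ T, and F(z) i = (s i + Σ_{j ∈ V} w i j · z j) / (1 + W i) if i ∉ T. Then for every initial vector z⁰ : V → ℝ, the iterates Fⁿ(z⁰) converge as n → ∞ to the unique T-equilibrium z* for (w, s), i.e., for every i ∈ V, Fⁿ(z⁰) i → z* i. -/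
/-- the power iteration converges to the unique T-equilibrium
from any initial vector. -/
theorem campaign_power_iteration_converges
    {V : Type*} [Fintype V] [DecidableEq V] [Nonempty V] (w : V → V → ℝ)
    (hw : ∀ i j, 0 ≤ w i j) (hdiag : ∀ i, w i i = 0)
    (s : V → ℝ) (T : Finset V) :
    ∃ zstar : V → ℝ,
      IsTEquilibrium w s T zstar ∧
      (∀ z : V → ℝ, IsTEquilibrium w s T z → z = zstar) ∧
      ∀ z0 : V → ℝ, ∀ i : V,
        Filter.Tendsto (fun n => (updateF w s T)^[n] z0 i)
          Filter.atTop (nhds (zstar i)) := by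
  classical
  set W : V → ℝ := fun i => ∑ j, w i j with hWdef
  have hW0 : ∀ i, 0 ≤ W i := fun i => Finset.sum_nonneg fun j _ => hw i j
  set M : ℝ := Finset.univ.sup' Finset.univ_nonempty W with hMdef
  have hWM : ∀ i, W i ≤ M := fun i => Finset.le_sup' W (Finset.mem_univ i)
  have hM0 : 0 ≤ M := le_trans (hW0 (Classical.arbitrary V)) (hWM _)
  have h1M : (0:ℝ) < 1 + M := by linarith
  set K : NNReal := ⟨M / (1 + M), div_nonneg hM0 h1M.le⟩ with hKdef
  have hKcoe : (K : ℝ) = M / (1 + M) := rfl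
  have hK1 : K < 1 := by
    rw [← NNReal.coe_lt_coe, hKcoe, NNReal.coe_one, div_lt_one h1M]; linarith
  have h1Wi : ∀ i, (0:ℝ) < 1 + W i := fun i => by have := hW0 i; linarith
  have hlip : LipschitzWith K (updateF w s T) := by
    apply LipschitzWith.of_dist_le_mul
    intro x y
    have hd0 : 0 ≤ dist x y := dist_nonneg
    rw [dist_pi_le_iff (by positivity)]
    intro i
    rw [Real.dist_eq]
    by_cases hi : i ∈ T
    · simp only [updateF, hi, if_pos, sub_self, abs_zero]
      positivity
    · simp only [updateF, hi, if_neg, not_false_iff]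
      have hnum : |(∑ j, w i j * x j) - ∑ j, w i j * y j| ≤ W i * dist x y := by
        rw [← Finset.sum_sub_distrib]
        calc |∑ j, (w i j * x j - w i j * y j)|
            ≤ ∑ j, |w i j * x j - w i j * y j| := Finset.abs_sum_le_sum_abs _ _
          _ ≤ ∑ j, w i j * dist x y := by
              apply Finset.sum_le_sum; intro j _
              rw [← mul_sub, abs_mul, abs_of_nonneg (hw i j)]
              refine mul_le_mul_of_nonneg_left ?_ (hw i j)
              have := dist_le_pi_dist x y j
              rwa [Real.dist_eq] at this
          _ = W i * dist x y := by rw [← Finset.sum_mul]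
      calc |(s i + ∑ j, w i j * x j) / (1 + W i) - (s i + ∑ j, w i j * y j) / (1 + W i)|
          = |(∑ j, w i j * x j) - ∑ j, w i j * y j| / (1 + W i) := by
            rw [div_sub_div_same, add_sub_add_left_eq_sub, abs_div,
              abs_of_pos (h1Wi i)]
        _ ≤ (W i * dist x y) / (1 + W i) := by
            have := hW0 i
            gcongr
        _ = (W i / (1 + W i)) * dist x y := by ring
        _ ≤ (K : ℝ) * dist x y := by
            refine mul_le_mul_of_nonneg_right ?_ hd0
            rw [hKcoe, div_le_div_iff₀ (h1Wi i) h1M]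
            have := hWM i; nlinarith
  have hc : ContractingWith K (updateF w s T) := ⟨hK1, hlip⟩
  have key : ∀ z : V → ℝ, Function.IsFixedPt (updateF w s T) z ↔ IsTEquilibrium w s T z := by
    intro z
    constructor
    · intro hz
      constructor
      · intro i hi
        have := congrFun hz i
        simpa [updateF, hi] using this.symm
      · intro i hi
        have hne : (1 + ∑ j, w i j) ≠ 0 := (h1Wi i).ne'
        have h := congrFun hz i
        simp only [updateF, hi, if_neg, not_false_iff] at h
        rw [div_eq_iff hne] at h
        linarith
    · intro hz
      funext i
      by_cases hi : i ∈ T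
      · simp [updateF, hi, hz.1 i hi]
      · have hne : (1 + ∑ j, w i j) ≠ 0 := (h1Wi i).ne'
        simp only [updateF, hi, if_neg, not_false_iff]
        rw [div_eq_iff hne]
        linarith [hz.2 i hi]
  refine ⟨ContractingWith.fixedPoint _ hc, (key _).mp (hc.fixedPoint_isFixedPt), ?_, ?_⟩
  · intro z hz
    exact hc.fixedPoint_unique ((key z).mpr hz)
  · intro z0 i
    exact tendsto_pi_nhds.mp (hc.tendsto_iterate_fixedPoint z0) i
end
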